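/- Any binary word w_0,...,w_{n-1} ∈ {0,1}^n in which the number of 0's between any two consecutive 1's is odd satisfies: either w_j = 0 for all even j ∈ [n], or w_j = 0 for all odd j ∈ [n]. Consequently the number of such words of length n is at most 2^{⌈n/2⌉} + 2^{⌊n/2⌋}. -/

import Mathlib

/-- A binary word satisfies the ODD constraint if the number of 0's between any
two consecutive 1's is odd. -/
def OddWord {n : ℕ} (w : Fin n → Bool) : Prop :=
  ∀ i j : Fin n, i < j → w i = true → w j = true →
    (∀ k : Fin n, i < k → k < j → w k = false) → Odd ((j : ℕ) - (i : ℕ) - 1)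

lemma odd_same_parity {n : ℕ} {w : Fin n → Bool} (hw : OddWord w) :
    ∀ d : ℕ, ∀ i j : Fin n, (j : ℕ) - (i : ℕ) = d → i < j → w i = true → w j = true →
      (i : ℕ) % 2 = (j : ℕ) % 2 := by
  intro d
  induction d using Nat.strong_induction_on with
  | _ d ih =>
    intro i j hd hij hi hj
    by_cases h : ∀ k : Fin n, i < k → k < j → w k = false
    · obtain ⟨m, hm⟩ := hw i j hij hi hj h
      have hij' : (i : ℕ) < j := hij
      omega
    · push_neg at h
      obtain ⟨k, hik, hkj, hk⟩ := h
      have hk' : w k = true := by simpa using hk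
      have hik' : (i : ℕ) < k := hik
      have hkj' : (k : ℕ) < j := hkj
      have h1 : (i : ℕ) % 2 = (k : ℕ) % 2 :=
        ih ((k : ℕ) - i) (by omega) i k rfl hik hi hk'
      have h2 : (k : ℕ) % 2 = (j : ℕ) % 2 :=
        ih ((j : ℕ) - k) (by omega) k j rfl hkj hk' hj
      omega

lemma odd_dichotomy {n : ℕ} {w : Fin n → Bool} (hw : OddWord w) :
    (∀ j : Fin n, Even (j : ℕ) → w j = false) ∨
    (∀ j : Fin n, Odd (j : ℕ) → w j = false) := by
  by_cases h : ∃ j : Fin n, Even (j : ℕ) ∧ w j = true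
  · right
    obtain ⟨j, hje, hjt⟩ := h
    intro k hk
    by_contra hkf
    have hkt : w k = true := by simpa using hkf
    have hne : (j : ℕ) ≠ (k : ℕ) := by
      obtain ⟨a, ha⟩ := hje; obtain ⟨b, hb⟩ := hk; omega
    rcases lt_or_gt_of_ne hne with hlt | hgt
    · have := odd_same_parity hw _ j k rfl hlt hjt hkt
      obtain ⟨a, ha⟩ := hje; obtain ⟨b, hb⟩ := hk; omega
    · have := odd_same_parity hw _ k j rfl hgt hkt hjt
      obtain ⟨a, ha⟩ := hje; obtain ⟨b, hb⟩ := hk; omega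
  · left
    push_neg at h
    intro j hje
    simpa using h j hje

lemma card_subtype_filter (n : ℕ) (p : ℕ → Prop) [DecidablePred p] :
    Fintype.card {j : Fin n // p (j:ℕ)} = ((Finset.range n).filter p).card := by
  rw [Fintype.card_subtype]
  refine Finset.card_bij (fun j _ => (j : ℕ)) ?_ ?_ ?_
  · intro a ha; simp at ha ⊢; exact ha
  · intro a _ b _ h; exact Fin.val_injective h
  · intro b hb
    simp only [Finset.mem_filter, Finset.mem_range] at hb
    exact ⟨⟨b, hb.1⟩, by simp [hb.2], rfl⟩

lemma range_filter_odd (n : ℕ) : ((Finset.range n).filter (fun x => Odd x)).card = n / 2 := by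
  induction n with
  | zero => simp
  | succ n ih =>
    rw [Finset.range_add_one, Finset.filter_insert]
    by_cases h : Odd n
    · rw [if_pos h, Finset.card_insert_of_notMem (by simp)]
      obtain ⟨m, hm⟩ := h; omega
    · rw [if_neg h]
      rw [Nat.not_odd_iff_even] at h
      obtain ⟨m, hm⟩ := h; omega

lemma range_filter_even (n : ℕ) : ((Finset.range n).filter (fun x => Even x)).card = (n + 1) / 2 := by
  induction n with
  | zero => simp
  | succ n ih =>
    rw [Finset.range_add_one, Finset.filter_insert]
    by_cases h : Even n
    · rw [if_pos h, Finset.card_insert_of_notMem (by simp)]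
      obtain ⟨m, hm⟩ := h; omega
    · rw [if_neg h]
      rw [Nat.not_even_iff_odd] at h
      obtain ⟨m, hm⟩ := h; omega

/-- Every word in the ODD constraint has all its even-position entries equal to `0`,
or all its odd-position entries equal to `0`; consequently the number of words of
length `n` in ODD is at most `2^⌈n/2⌉ + 2^⌊n/2⌋`. -/
theorem stmt2 (n : ℕ) :
    (∀ w : Fin n → Bool, OddWord w →
      ((∀ j : Fin n, Even (j : ℕ) → w j = false) ∨
       (∀ j : Fin n, Odd (j : ℕ) → w j = false))) ∧
    Nat.card {w : Fin n → Bool // OddWord w} ≤ 2 ^ ((n + 1) / 2) + 2 ^ (n / 2) := by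
  classical
  refine ⟨fun w hw => odd_dichotomy hw, ?_⟩
  set T := ({j : Fin n // Odd (j:ℕ)} → Bool) ⊕ ({j : Fin n // Even (j:ℕ)} → Bool) with hT
  set f : {w : Fin n → Bool // OddWord w} → T :=
    fun w => if h : ∀ j : Fin n, Even (j:ℕ) → w.1 j = false
      then Sum.inl (fun j => w.1 j.1)
      else Sum.inr (fun j => w.1 j.1) with hf
  have hinj : Function.Injective f := by
    intro w w' hww
    simp only [hf] at hww
    by_cases h1 : ∀ j : Fin n, Even (j:ℕ) → w.1 j = false <;>
      by_cases h2 : ∀ j : Fin n, Even (j:ℕ) → w'.1 j = false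
    · rw [dif_pos h1, dif_pos h2] at hww
      apply Subtype.ext; funext j
      by_cases hj : Even (j : ℕ)
      · rw [h1 j hj, h2 j hj]
      · rw [Nat.not_even_iff_odd] at hj
        have := congrFun (Sum.inl.inj hww) ⟨j, hj⟩
        exact this
    · rw [dif_pos h1, dif_neg h2] at hww; exact absurd hww Sum.inl_ne_inr
    · rw [dif_neg h1, dif_pos h2] at hww; exact absurd hww Sum.inr_ne_inl
    · rw [dif_neg h1, dif_neg h2] at hww
      have ho1 : ∀ j : Fin n, Odd (j:ℕ) → w.1 j = false :=
        (odd_dichotomy w.2).resolve_left h1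
      have ho2 : ∀ j : Fin n, Odd (j:ℕ) → w'.1 j = false :=
        (odd_dichotomy w'.2).resolve_left h2
      apply Subtype.ext; funext j
      by_cases hj : Even (j : ℕ)
      · exact congrFun (Sum.inr.inj hww) ⟨j, hj⟩
      · rw [Nat.not_even_iff_odd] at hj
        rw [ho1 j hj, ho2 j hj]
  have hcard : Nat.card {w : Fin n → Bool // OddWord w} ≤ Nat.card T :=
    Nat.card_le_card_of_injective f hinj
  have hTcard : Nat.card T = 2 ^ (n / 2) + 2 ^ ((n + 1) / 2) := by
    rw [hT, Nat.card_sum, Nat.card_eq_fintype_card, Nat.card_eq_fintype_card,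
      Fintype.card_fun, Fintype.card_fun, Fintype.card_bool,
      card_subtype_filter n (fun x => Odd x), card_subtype_filter n (fun x => Even x),
      range_filter_odd, range_filter_even]
  omega
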